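/- arXiv:1810.01203 — 2 statements merged into one kernel-verified Lean document; each statement's English description precedes it below -/
import Mathlib

section
/- If a subcollection W of Y satisfies L_m(θ;W) → 0 in probability as n → ∞ for a fixed θ ∈ Θ with θ ≠ θ^0, then P(L_n(θ;Y) ≥ 1) → 0 as n → ∞. -/
open MeasureTheory Filter

/-- Setup: for each `n`, `Y n` is a random vector in `ℝⁿ` with density `f n θ` w.r.t. a
σ-finite `ν n` (true parameter `θ0`), and `W n` is a subcollection of `Y n` with
`m n` components (`m n → ∞`), obtained by selecting coordinates via the injection
`idx n`, with density `g n θ` w.r.t. `μW n` compatible with `f` by marginalization.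
`Ln n θ ω` and `Lm n θ ω` are the likelihood ratios of the full data and of the
subcollection.  Conclusion: for a fixed `θ ∈ Θ` with `θ ≠ θ0`, if
`Lm n θ → 0` in probability as `n → ∞` then `P (Ln n θ ≥ 1) → 0`. -/
theorem statement1
    {Ω : Type*} [MeasurableSpace Ω] (P : Measure Ω) [IsProbabilityMeasure P]
    {T : Type*} [MetricSpace T] (Θ : Set T) (θ0 : T) (hθ0 : θ0 ∈ Θ)
    -- the full data and its densities
    (Y : (n : ℕ) → Ω → (Fin n → ℝ)) (hY : ∀ n, Measurable (Y n))
    (ν : (n : ℕ) → Measure (Fin n → ℝ)) (hν : ∀ n, SigmaFinite (ν n))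
    (f : (n : ℕ) → T → (Fin n → ℝ) → ℝ)
    (hfmeas : ∀ n, ∀ θ ∈ Θ, Measurable (f n θ))
    (hfpos : ∀ n, ∀ θ ∈ Θ, ∀ y, 0 ≤ f n θ y)
    (hf0 : ∀ n, Measure.map (Y n) P = (ν n).withDensity fun y => ENNReal.ofReal (f n θ0 y))
    -- the subcollections, with  m n → ∞ components
    (m : ℕ → ℕ) (hm : Tendsto m atTop atTop)
    (idx : (n : ℕ) → Fin (m n) → Fin n) (hidx : ∀ n, Function.Injective (idx n))
    (W : (n : ℕ) → Ω → (Fin (m n) → ℝ)) (hW : ∀ n, W n = fun ω j => Y n ω (idx n j))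
    (μW : (n : ℕ) → Measure (Fin (m n) → ℝ)) (hμW : ∀ n, SigmaFinite (μW n))
    (g : (n : ℕ) → T → (Fin (m n) → ℝ) → ℝ)
    (hgmeas : ∀ n, ∀ θ ∈ Θ, Measurable (g n θ))
    (hgpos : ∀ n, ∀ θ ∈ Θ, ∀ w, 0 ≤ g n θ w)
    (hmarg : ∀ n, ∀ θ ∈ Θ, ∀ B : Set (Fin (m n) → ℝ), MeasurableSet B →
      ∫⁻ y in (fun y : Fin n → ℝ => fun j => y (idx n j)) ⁻¹' B, ENNReal.ofReal (f n θ y) ∂(ν n)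
        = ∫⁻ w in B, ENNReal.ofReal (g n θ w) ∂(μW n))
    -- the likelihood ratios
    (Ln : (n : ℕ) → T → Ω → ℝ) (hLn : ∀ n θ ω, Ln n θ ω = f n θ (Y n ω) / f n θ0 (Y n ω))
    (Lm : (n : ℕ) → T → Ω → ℝ) (hLm : ∀ n θ ω, Lm n θ ω = g n θ (W n ω) / g n θ0 (W n ω))
    -- the fixed parameter θ ≠ θ0, for which Lm(θ; W) → 0 in probability
    (θ : T) (hθ : θ ∈ Θ) (hne : θ ≠ θ0)
    (hprob : ∀ ε > (0 : ℝ), Tendsto (fun n => P {ω | ε ≤ |Lm n θ ω|}) atTop (nhds 0)) :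
    Tendsto (fun n => P {ω | 1 ≤ Ln n θ ω}) atTop (nhds 0) := by
  -- main inequality: for each ε > 0 and each n,
  -- P(Ln ≥ 1) ≤ P(|Lm| ≥ ε) + ε
  have key : ∀ ε : ℝ, 0 < ε → ∀ n : ℕ,
      P {ω | 1 ≤ Ln n θ ω} ≤ P {ω | ε ≤ |Lm n θ ω|} + ENNReal.ofReal ε := by
    intro ε hε n
    have hf0m := hfmeas n θ0 hθ0
    have hfθm := hfmeas n θ hθ
    have hg0m := hgmeas n θ0 hθ0
    have hgθm := hgmeas n θ hθ
    set π : (Fin n → ℝ) → (Fin (m n) → ℝ) := fun y => fun j => y (idx n j) with hπ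
    have hπm : Measurable π := measurable_pi_lambda _ fun j => measurable_pi_apply _
    set S : Set (Fin n → ℝ) := {y | 1 ≤ f n θ y / f n θ0 y} with hSdef
    have hSm : MeasurableSet S := measurableSet_le measurable_const (hfθm.div hf0m)
    set Bbig : Set (Fin (m n) → ℝ) := {w | ε ≤ |g n θ w / g n θ0 w|} with hBbigdef
    have hBbigm : MeasurableSet Bbig :=
      measurableSet_le measurable_const (hgθm.div hg0m).abs
    set Bs : Set (Fin (m n) → ℝ) := {w | g n θ w < ε * g n θ0 w} with hBsdef
    have hBsm : MeasurableSet Bs := measurableSet_lt hgθm (measurable_const.mul hg0m)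
    set B0 : Set (Fin (m n) → ℝ) := {w | g n θ0 w = 0} with hB0def
    have hB0m : MeasurableSet B0 := hg0m (measurableSet_singleton 0)
    -- express the two events as preimages under Y n
    have hYset : {ω | 1 ≤ Ln n θ ω} = Y n ⁻¹' S := by
      ext ω; simp only [hLn, Set.mem_setOf_eq, Set.mem_preimage, hSdef]
    have hWset : {ω | ε ≤ |Lm n θ ω|} = Y n ⁻¹' (π ⁻¹' Bbig) := by
      ext ω
      simp only [hLm, hW n, Set.mem_setOf_eq, Set.mem_preimage, hBbigdef, hπ]
    -- work with the pushforward measure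
    have hmap : ∀ A : Set (Fin n → ℝ), MeasurableSet A →
        P (Y n ⁻¹' A) = ∫⁻ y in A, ENNReal.ofReal (f n θ0 y) ∂(ν n) := by
      intro A hA
      rw [← Measure.map_apply (hY n) hA, hf0 n, withDensity_apply _ hA]
    -- total mass of g θ0 is one
    have hone : ∫⁻ w, ENNReal.ofReal (g n θ0 w) ∂(μW n) = 1 := by
      have h := hmarg n θ0 hθ0 Set.univ MeasurableSet.univ
      rw [Set.preimage_univ, Measure.restrict_univ, Measure.restrict_univ] at h
      rw [← h]
      have h2 := hmap Set.univ MeasurableSet.univ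
      rw [Set.preimage_univ, Measure.restrict_univ] at h2
      rw [← h2, measure_univ]
    -- the set inclusion
    have hsub : S ⊆ (π ⁻¹' Bbig) ∪ ((S ∩ π ⁻¹' Bs) ∪ π ⁻¹' B0) := by
      intro y hy
      by_cases hb : π y ∈ Bbig
      · exact Or.inl hb
      · right
        by_cases h0 : g n θ0 (π y) = 0
        · exact Or.inr h0
        · left
          refine ⟨hy, ?_⟩
          have hpos0 : 0 < g n θ0 (π y) := lt_of_le_of_ne (hgpos n θ0 hθ0 _) (Ne.symm h0)
          have habs : |g n θ (π y) / g n θ0 (π y)| = g n θ (π y) / g n θ0 (π y) :=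
            abs_of_nonneg (div_nonneg (hgpos n θ hθ _) hpos0.le)
          have hlt : g n θ (π y) / g n θ0 (π y) < ε := by
            by_contra hc
            exact hb (by rw [hBbigdef, Set.mem_setOf_eq, habs]; linarith)
          have := (div_lt_iff₀ hpos0).mp hlt
          simpa [hBsdef, mul_comm] using this
    -- bound the middle piece
    have hmid : P (Y n ⁻¹' (S ∩ π ⁻¹' Bs)) ≤ ENNReal.ofReal ε := by
      rw [hmap _ (hSm.inter (hπm hBsm))]
      have step1 : ∫⁻ y in S ∩ π ⁻¹' Bs, ENNReal.ofReal (f n θ0 y) ∂(ν n)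
          ≤ ∫⁻ y in S ∩ π ⁻¹' Bs, ENNReal.ofReal (f n θ y) ∂(ν n) := by
        refine setLIntegral_mono (hfθm.ennreal_ofReal) ?_
        intro y hy
        apply ENNReal.ofReal_le_ofReal
        have hy1 : 1 ≤ f n θ y / f n θ0 y := hy.1
        by_cases h0 : f n θ0 y = 0
        · rw [h0]; exact hfpos n θ hθ y
        · have hpos : 0 < f n θ0 y := lt_of_le_of_ne (hfpos n θ0 hθ0 y) (Ne.symm h0)
          exact (one_le_div hpos).mp hy1
      have step2 : ∫⁻ y in S ∩ π ⁻¹' Bs, ENNReal.ofReal (f n θ y) ∂(ν n)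
          ≤ ∫⁻ y in π ⁻¹' Bs, ENNReal.ofReal (f n θ y) ∂(ν n) :=
        lintegral_mono_set Set.inter_subset_right
      have step3 : ∫⁻ y in π ⁻¹' Bs, ENNReal.ofReal (f n θ y) ∂(ν n)
          = ∫⁻ w in Bs, ENNReal.ofReal (g n θ w) ∂(μW n) := hmarg n θ hθ Bs hBsm
      have step4 : ∫⁻ w in Bs, ENNReal.ofReal (g n θ w) ∂(μW n)
          ≤ ∫⁻ w in Bs, ENNReal.ofReal ε * ENNReal.ofReal (g n θ0 w) ∂(μW n) := by
        refine setLIntegral_mono (measurable_const.mul hg0m.ennreal_ofReal) ?_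
        intro w hw
        rw [← ENNReal.ofReal_mul hε.le]
        exact ENNReal.ofReal_le_ofReal (le_of_lt hw)
      have step5 : ∫⁻ w in Bs, ENNReal.ofReal ε * ENNReal.ofReal (g n θ0 w) ∂(μW n)
          = ENNReal.ofReal ε * ∫⁻ w in Bs, ENNReal.ofReal (g n θ0 w) ∂(μW n) :=
        lintegral_const_mul _ hg0m.ennreal_ofReal
      have step6 : ∫⁻ w in Bs, ENNReal.ofReal (g n θ0 w) ∂(μW n) ≤ 1 := by
        rw [← hone]; exact setLIntegral_le_lintegral _ _
      calc ∫⁻ y in S ∩ π ⁻¹' Bs, ENNReal.ofReal (f n θ0 y) ∂(ν n)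
          ≤ ∫⁻ w in Bs, ENNReal.ofReal ε * ENNReal.ofReal (g n θ0 w) ∂(μW n) :=
            le_trans step1 (le_trans step2 (step3 ▸ step4))
        _ = ENNReal.ofReal ε * ∫⁻ w in Bs, ENNReal.ofReal (g n θ0 w) ∂(μW n) := step5
        _ ≤ ENNReal.ofReal ε * 1 := mul_le_mul_right step6 _
        _ = ENNReal.ofReal ε := mul_one _
    -- the null piece
    have hnull : P (Y n ⁻¹' (π ⁻¹' B0)) = 0 := by
      rw [hmap _ (hπm hB0m), hmarg n θ0 hθ0 B0 hB0m]
      have : ∫⁻ w in B0, ENNReal.ofReal (g n θ0 w) ∂(μW n) = ∫⁻ _ in B0, 0 ∂(μW n) := by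
        refine setLIntegral_congr_fun hB0m (fun w hw => ?_)
        have h0 : g n θ0 w = 0 := hw
        rw [h0, ENNReal.ofReal_zero]
      rw [this, lintegral_zero]
    -- assemble
    calc P {ω | 1 ≤ Ln n θ ω}
        = P (Y n ⁻¹' S) := by rw [hYset]
      _ ≤ P (Y n ⁻¹' (π ⁻¹' Bbig) ∪ (Y n ⁻¹' (S ∩ π ⁻¹' Bs) ∪ Y n ⁻¹' (π ⁻¹' B0))) := by
          apply measure_mono
          intro ω hω
          simpa [Set.preimage_union, Set.preimage_inter] using hsub hω
      _ ≤ P (Y n ⁻¹' (π ⁻¹' Bbig)) + (P (Y n ⁻¹' (S ∩ π ⁻¹' Bs)) + P (Y n ⁻¹' (π ⁻¹' B0))) :=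
          le_trans (measure_union_le _ _) (add_le_add_right (measure_union_le _ _) _)
      _ = P {ω | ε ≤ |Lm n θ ω|} + (P (Y n ⁻¹' (S ∩ π ⁻¹' Bs)) + 0) := by rw [hWset, hnull]
      _ ≤ P {ω | ε ≤ |Lm n θ ω|} + ENNReal.ofReal ε := by
          rw [add_zero]; exact add_le_add_right hmid _
  -- conclude the limit
  rw [ENNReal.tendsto_atTop_zero]
  intro ε' hε'
  rw [← eventually_atTop]
  by_cases htop : ε' = ⊤
  · exact Eventually.of_forall fun n => htop ▸ le_top
  · set δ : ℝ := (min ε' 1 / 2).toReal with hδdef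
    have hmin_pos : 0 < min ε' 1 := lt_min hε' one_pos
    have hmin_ne_top : min ε' 1 / 2 ≠ ⊤ :=
      ne_top_of_le_ne_top ENNReal.one_ne_top
        ((ENNReal.half_le_self).trans (min_le_right _ _))
    have hδpos : 0 < δ := by
      rw [hδdef]
      exact ENNReal.toReal_pos (ENNReal.div_pos hmin_pos.ne' (by norm_num)).ne' hmin_ne_top
    have hofδ : ENNReal.ofReal δ = min ε' 1 / 2 := by
      rw [hδdef, ENNReal.ofReal_toReal hmin_ne_top]
    have hhalf_pos : (0 : ENNReal) < ε' / 2 :=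
      ENNReal.div_pos (ne_of_gt hε') (by norm_num)
    have hev : ∀ᶠ n in atTop, P {ω | δ ≤ |Lm n θ ω|} < ε' / 2 :=
      (hprob δ hδpos).eventually_lt_const hhalf_pos
    filter_upwards [hev] with n hn
    calc P {ω | 1 ≤ Ln n θ ω}
        ≤ P {ω | δ ≤ |Lm n θ ω|} + ENNReal.ofReal δ := key δ hδpos n
      _ ≤ ε' / 2 + ε' / 2 := by
          refine add_le_add hn.le ?_
          rw [hofδ]
          gcongr
          exact min_le_left _ _
      _ = ε' := ENNReal.add_halves ε'
end

section
/- In the logit-normal MGLMM, let c(t) = log(1+e^t) and p_i(β_2, θ_d) = E[c'(x_{i,i}^T β_2 + √(θ_d/θ_d^0)(U_i^{(1)} + U_i^{(2)}))], the marginal success probability of Y_{i,i,2} under parameters (β_2, θ_d), where the expectation is under the true parameter θ^0. If θ^0 is an interior point of Θ and ε > 0 is small enough that the closed ball B̄_ε(θ^0) consists of interior points of Θ, then there exists a constant c_1 > 0, not depending on i, N, or θ, such that |p_i(β_2^0, θ_d^0) − p_i(β_2, θ_d^0)| ≥ c_1 |x_{i,i}^T(β_2 − β_2^0)| for all θ =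 (β_1, β_2, θ_d) ∈ B̄_ε(θ^0) and all i. -/
open MeasureTheory Filter ProbabilityTheory

noncomputable section

/-- The logistic function `c'(t) = 1/(1+e^{−t})`, the derivative of the Bernoulli
cumulant function `c(t) = log(1+e^t)`. -/
def logistic (t : ℝ) : ℝ := 1 / (1 + Real.exp (-t))

lemma logistic_nonneg (t : ℝ) : 0 ≤ logistic t := by unfold logistic; positivity

lemma logistic_le_one (t : ℝ) : logistic t ≤ 1 := by
  unfold logistic
  rw [div_le_one (by positivity)]
  linarith [Real.exp_pos (-t)]

lemma logistic_continuous : Continuous logistic := by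
  unfold logistic
  exact continuous_const.div (by continuity) (fun t => by positivity)

lemma logistic_hasDerivAt (t : ℝ) :
    HasDerivAt logistic (Real.exp (-t) / (1 + Real.exp (-t))^2) t := by
  have h1 : HasDerivAt (fun s : ℝ => 1 + Real.exp (-s)) (-Real.exp (-t)) t := by
    simpa using ((hasDerivAt_neg t).exp.const_add 1)
  have h2 := h1.inv (by positivity)
  have heq : logistic = fun s : ℝ => (1 + Real.exp (-s))⁻¹ := by
    funext s; simp [logistic, one_div]
  rw [heq]
  convert h2 using 1
  exacts [rfl, rfl, rfl, by rw [neg_neg]]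

lemma logistic_deriv_lower (t : ℝ) :
    Real.exp (-|t|) / 4 ≤ Real.exp (-t) / (1 + Real.exp (-t))^2 := by
  rcases le_or_gt 0 t with h | h
  · rw [abs_of_nonneg h]
    have he : Real.exp (-t) ≤ 1 := Real.exp_le_one_iff.mpr (by linarith)
    have hp : (0:ℝ) < Real.exp (-t) := Real.exp_pos _
    rw [div_le_div_iff₀ (by norm_num) (by positivity)]
    nlinarith [mul_nonneg hp.le (sub_nonneg.2 he)]
  · rw [abs_of_neg h, neg_neg]
    have key : Real.exp (-t) / (1 + Real.exp (-t))^2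
        = Real.exp t / (1 + Real.exp t)^2 := by
      rw [Real.exp_neg]
      have hp : (0:ℝ) < Real.exp t := Real.exp_pos t
      field_simp
      ring
    rw [key]
    have he : Real.exp t ≤ 1 := Real.exp_le_one_iff.mpr (le_of_lt h)
    have hp : (0:ℝ) < Real.exp t := Real.exp_pos t
    rw [div_le_div_iff₀ (by norm_num) (by positivity)]
    nlinarith [mul_nonneg hp.le (sub_nonneg.2 he)]

lemma logistic_diff_lower {M a b : ℝ} (ha : |a| ≤ M) (hb : |b| ≤ M) (hab : a ≤ b) :
    Real.exp (-M) / 4 * (b - a) ≤ logistic b - logistic a := by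
  rcases eq_or_lt_of_le hab with rfl | h
  · simp
  · obtain ⟨c, hc, hcd⟩ := exists_hasDerivAt_eq_slope logistic
      (fun t => Real.exp (-t) / (1 + Real.exp (-t))^2) h
      logistic_continuous.continuousOn (fun t _ => logistic_hasDerivAt t)
    have hba : (0:ℝ) < b - a := by linarith
    have hceq : logistic b - logistic a
        = (Real.exp (-c) / (1 + Real.exp (-c))^2) * (b - a) := by
      rw [hcd]; field_simp
    rw [hceq]
    have hcM : |c| ≤ M := by
      rw [abs_le]
      exact ⟨by linarith [hc.1, (abs_le.1 ha).1], by linarith [hc.2, (abs_le.1 hb).2]⟩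
    have h1 : Real.exp (-M) / 4 ≤ Real.exp (-|c|) / 4 := by
      gcongr
    exact mul_le_mul_of_nonneg_right (h1.trans (logistic_deriv_lower c)) (le_of_lt hba)

/-- The parameter set of the logit-normal MGLMM:
`Θ = ℝ^p × ℝ^p × (0,∞) ⊆ ℝ^d`, `d = 2p+1` (0-based coordinates). -/
def mglmmΘ (p : ℕ) : Set (EuclideanSpace ℝ (Fin (2 * p + 1))) :=
  {θ | 0 < θ ⟨2 * p, by omega⟩}

/-- The first regression coefficient vector `β₁ = (θ_1, …, θ_p)`. -/
def mglmmβ1 (p : ℕ) (θ : EuclideanSpace ℝ (Fin (2 * p + 1))) : Fin p → ℝ :=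
  fun j => θ ⟨j.1, by have := j.2; omega⟩

/-- The second regression coefficient vector `β₂ = (θ_{p+1}, …, θ_{2p})`. -/
def mglmmβ2 (p : ℕ) (θ : EuclideanSpace ℝ (Fin (2 * p + 1))) : Fin p → ℝ :=
  fun j => θ ⟨p + j.1, by have := j.2; omega⟩

/-- The random-effect variance parameter `θ_d`. -/
def mglmmVar (p : ℕ) (θ : EuclideanSpace ℝ (Fin (2 * p + 1))) : ℝ :=
  θ ⟨2 * p, by omega⟩

/-- `p_i(β₂, θ_d) = E[c'(x_{i,i}ᵀ β₂ + √(θ_d/θ_d⁰)(U_i^{(1)} + U_i^{(2)}))]`, the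
marginal success probability of `Y_{i,i,2}` under parameters `(β₂, θ_d)`, where the
expectation is under the true parameter (`U_i^{(1)}, U_i^{(2)} ∼ N(0, θ_d⁰)`
independently). -/
def mglmmP {p : ℕ} (x : ℕ → EuclideanSpace ℝ (Fin p)) (θd0 : ℝ)
    (β2 : Fin p → ℝ) (θd : ℝ) (i : ℕ) : ℝ :=
  ∫ u : ℝ × ℝ,
    logistic ((∑ j, x i j * β2 j) + Real.sqrt (θd / θd0) * (u.1 + u.2))
    ∂((gaussianReal 0 θd0.toNNReal).prod (gaussianReal 0 θd0.toNNReal))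

lemma mglmm_sum_bound {p : ℕ} (x : EuclideanSpace ℝ (Fin p)) (hx : ‖x‖ ≤ 1)
    (θ : EuclideanSpace ℝ (Fin (2 * p + 1))) :
    |∑ j, x j * mglmmβ2 p θ j| ≤ ‖θ‖ := by
  have h1 : |∑ j, x j * mglmmβ2 p θ j| ≤ ∑ j, |x j| * |mglmmβ2 p θ j| := by
    calc |∑ j, x j * mglmmβ2 p θ j| ≤ ∑ j, |x j * mglmmβ2 p θ j| :=
          Finset.abs_sum_le_sum_abs _ _
      _ = ∑ j, |x j| * |mglmmβ2 p θ j| := by simp [abs_mul]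
  have h2 : ∑ j, |x j| * |mglmmβ2 p θ j| ≤
      Real.sqrt (∑ j, |x j| ^ 2) * Real.sqrt (∑ j, |mglmmβ2 p θ j| ^ 2) :=
    Real.sum_mul_le_sqrt_mul_sqrt _ _ _
  have hxn : Real.sqrt (∑ j, |x j| ^ 2) = ‖x‖ := by
    rw [EuclideanSpace.norm_eq]
    simp [Real.norm_eq_abs]
  have hsub : (∑ j : Fin p, |mglmmβ2 p θ j| ^ 2) ≤ ∑ k : Fin (2 * p + 1), |θ k| ^ 2 := by
    have hinj : Function.Injective (fun j : Fin p => (⟨p + j.1, by omega⟩ : Fin (2 * p + 1))) := by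
      intro a b h
      simp only [Fin.mk.injEq] at h
      exact Fin.ext (Nat.add_left_cancel h)
    calc (∑ j : Fin p, |mglmmβ2 p θ j| ^ 2)
        = ∑ k ∈ (Finset.univ : Finset (Fin p)).map
            ⟨fun j : Fin p => (⟨p + j.1, by omega⟩ : Fin (2 * p + 1)), hinj⟩, |θ k| ^ 2 := by
          rw [Finset.sum_map]
          simp [mglmmβ2]
      _ ≤ ∑ k : Fin (2 * p + 1), |θ k| ^ 2 :=
          Finset.sum_le_sum_of_subset_of_nonneg (Finset.subset_univ _)
            (fun k _ _ => sq_nonneg _)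
  have hβn : Real.sqrt (∑ j, |mglmmβ2 p θ j| ^ 2) ≤ ‖θ‖ := by
    rw [EuclideanSpace.norm_eq]
    apply Real.sqrt_le_sqrt
    simpa [Real.norm_eq_abs] using hsub
  calc |∑ j, x j * mglmmβ2 p θ j| ≤ Real.sqrt (∑ j, |x j| ^ 2) * Real.sqrt (∑ j, |mglmmβ2 p θ j| ^ 2) := h1.trans h2
    _ ≤ 1 * ‖θ‖ := by
        apply mul_le_mul (hxn ▸ hx) hβn (Real.sqrt_nonneg _) (by norm_num)
    _ = ‖θ‖ := one_mul _


/-- for the logit-normal MGLMM.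
If `θ0` is an interior point of `Θ` and `ε > 0` is small enough that the closed ball
`B̄_ε(θ0)` consists of interior points of `Θ`, then there is a constant `c₁ > 0`, not
depending on `i`, `N` or `θ`, such that
`|p_i(β₂⁰, θ_d⁰) − p_i(β₂, θ_d⁰)| ≥ c₁ |x_{i,i}ᵀ(β₂ − β₂⁰)|` for all
`θ = (β₁, β₂, θ_d) ∈ B̄_ε(θ0)` and all `i`.  (Here `x i` denotes `x_{i,i}`, with
`‖x_{i,i}‖ ≤ 1`.) -/
theorem statement15
    (p : ℕ) (x : ℕ → EuclideanSpace ℝ (Fin p)) (hx : ∀ i, ‖x i‖ ≤ 1)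
    (θ0 : EuclideanSpace ℝ (Fin (2 * p + 1))) (hθ0 : θ0 ∈ interior (mglmmΘ p))
    (ε : ℝ) (hε : 0 < ε)
    (hball : Metric.closedBall θ0 ε ⊆ interior (mglmmΘ p)) :
    ∃ c1 > (0 : ℝ), ∀ θ ∈ Metric.closedBall θ0 ε, ∀ i : ℕ,
      c1 * |∑ j, x i j * (mglmmβ2 p θ j - mglmmβ2 p θ0 j)|
        ≤ |mglmmP x (mglmmVar p θ0) (mglmmβ2 p θ0) (mglmmVar p θ0) i
            - mglmmP x (mglmmVar p θ0) (mglmmβ2 p θ) (mglmmVar p θ0) i| := by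
  classical
  set v : ℝ := mglmmVar p θ0 with hv
  set μ : Measure (ℝ × ℝ) :=
    (gaussianReal 0 v.toNNReal).prod (gaussianReal 0 v.toNNReal) with hμ
  set s : ℝ := Real.sqrt (v / v) with hs
  have hs0 : 0 ≤ s := Real.sqrt_nonneg _
  set R : ℝ := ‖θ0‖ + ε with hR
  have hRnn : 0 ≤ R := by positivity
  have hμprob : IsProbabilityMeasure μ := by rw [hμ]; infer_instance
  -- the weight function
  have hw_cont : Continuous fun u : ℝ × ℝ => Real.exp (-(s * |u.1 + u.2|)) := by
    fun_prop
  have hw_int : Integrable (fun u : ℝ × ℝ => Real.exp (-(s * |u.1 + u.2|))) μ := by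
    refine ⟨hw_cont.aestronglyMeasurable, ?_⟩
    apply HasFiniteIntegral.of_bounded (C := 1)
    filter_upwards with u
    rw [Real.norm_eq_abs, abs_of_nonneg (Real.exp_pos _).le]
    exact Real.exp_le_one_iff.mpr (neg_nonpos.mpr (by positivity))
  set c0 : ℝ := ∫ u : ℝ × ℝ, Real.exp (-(s * |u.1 + u.2|)) ∂μ with hc0
  have hc0pos : 0 < c0 := by
    rw [hc0, MeasureTheory.integral_pos_iff_support_of_nonneg
      (fun u => (Real.exp_pos _).le) hw_int]
    have : Function.support (fun u : ℝ × ℝ => Real.exp (-(s * |u.1 + u.2|))) = Set.univ :=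
      Set.eq_univ_of_forall fun u => (Real.exp_pos _).ne'
    rw [this]
    simp
  -- the averaged logistic function
  set F : ℝ → ℝ := fun t => ∫ u : ℝ × ℝ, logistic (t + s * (u.1 + u.2)) ∂μ with hF
  have hF_int : ∀ t : ℝ, Integrable (fun u : ℝ × ℝ => logistic (t + s * (u.1 + u.2))) μ := by
    intro t
    have hc : Continuous fun u : ℝ × ℝ => logistic (t + s * (u.1 + u.2)) :=
      logistic_continuous.comp (by fun_prop)
    refine ⟨hc.aestronglyMeasurable, ?_⟩
    apply HasFiniteIntegral.of_bounded (C := 1)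
    filter_upwards with u
    rw [Real.norm_eq_abs, abs_of_nonneg (logistic_nonneg _)]
    exact logistic_le_one _
  -- key monotonicity-with-slope estimate
  have key : ∀ a b : ℝ, |a| ≤ R → |b| ≤ R → a ≤ b →
      Real.exp (-R) / 4 * c0 * (b - a) ≤ F b - F a := by
    intro a b ha hb hab
    have hpt : ∀ u : ℝ × ℝ,
        (Real.exp (-R) / 4 * (b - a)) * Real.exp (-(s * |u.1 + u.2|))
          ≤ logistic (b + s * (u.1 + u.2)) - logistic (a + s * (u.1 + u.2)) := by
      intro u
      set w : ℝ := u.1 + u.2 with hw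
      have h1 : |a + s * w| ≤ R + s * |w| := by
        calc |a + s * w| ≤ |a| + |s * w| := abs_add_le _ _
          _ ≤ R + s * |w| := by rw [abs_mul, abs_of_nonneg hs0]; linarith
      have h2 : |b + s * w| ≤ R + s * |w| := by
        calc |b + s * w| ≤ |b| + |s * w| := abs_add_le _ _
          _ ≤ R + s * |w| := by rw [abs_mul, abs_of_nonneg hs0]; linarith
      have heq : Real.exp (-(R + s * |w|)) = Real.exp (-R) * Real.exp (-(s * |w|)) := by
        rw [← Real.exp_add]; ring_nf
      calc (Real.exp (-R) / 4 * (b - a)) * Real.exp (-(s * |w|))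
          = Real.exp (-(R + s * |w|)) / 4 * ((b + s * w) - (a + s * w)) := by
            rw [heq]; ring
        _ ≤ logistic (b + s * w) - logistic (a + s * w) :=
            logistic_diff_lower h1 h2 (by linarith)
    have hint1 : Integrable
        (fun u : ℝ × ℝ => (Real.exp (-R) / 4 * (b - a)) * Real.exp (-(s * |u.1 + u.2|))) μ :=
      hw_int.const_mul _
    have hint2 : Integrable
        (fun u : ℝ × ℝ => logistic (b + s * (u.1 + u.2)) - logistic (a + s * (u.1 + u.2))) μ :=
      (hF_int b).sub (hF_int a)
    have hmono := integral_mono hint1 hint2 hpt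
    rw [integral_const_mul, integral_sub (hF_int b) (hF_int a)] at hmono
    have hrw : Real.exp (-R) / 4 * c0 * (b - a)
        = Real.exp (-R) / 4 * (b - a) * c0 := by ring
    rw [hrw]
    exact hmono
  refine ⟨Real.exp (-R) / 4 * c0, mul_pos (by positivity) hc0pos, ?_⟩
  intro θ hθ i
  have hθn : ‖θ‖ ≤ R := by
    have h1 : ‖θ - θ0‖ ≤ ε := mem_closedBall_iff_norm.mp hθ
    have h2 : ‖θ‖ - ‖θ0‖ ≤ ‖θ - θ0‖ := norm_sub_norm_le θ θ0
    rw [hR]; linarith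
  have hθ0n : ‖θ0‖ ≤ R := by rw [hR]; linarith
  set a0 : ℝ := ∑ j, x i j * mglmmβ2 p θ0 j with ha0
  set a : ℝ := ∑ j, x i j * mglmmβ2 p θ j with ha
  have ha0R : |a0| ≤ R := (mglmm_sum_bound (x i) (hx i) θ0).trans hθ0n
  have haR : |a| ≤ R := (mglmm_sum_bound (x i) (hx i) θ).trans hθn
  have hdiff : ∑ j, x i j * (mglmmβ2 p θ j - mglmmβ2 p θ0 j) = a - a0 := by
    rw [ha, ha0, ← Finset.sum_sub_distrib]
    congr 1; funext j; ring
  have hP0 : mglmmP x (mglmmVar p θ0) (mglmmβ2 p θ0) (mglmmVar p θ0) i = F a0 := by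
    simp only [hF, hs, hμ, hv, ha0, mglmmP]
  have hP : mglmmP x (mglmmVar p θ0) (mglmmβ2 p θ) (mglmmVar p θ0) i = F a := by
    simp only [hF, hs, hμ, hv, ha, mglmmP]
  rw [hP0, hP, hdiff]
  rcases le_total a0 a with hle | hle
  · have := key a0 a ha0R haR hle
    rw [abs_of_nonneg (by linarith : (0:ℝ) ≤ a - a0)]
    rw [abs_sub_comm]
    calc Real.exp (-R) / 4 * c0 * (a - a0) ≤ F a - F a0 := this
      _ ≤ |F a - F a0| := le_abs_self _
  · have := key a a0 haR ha0R hle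
    rw [abs_of_nonpos (by linarith : a - a0 ≤ (0:ℝ))]
    calc Real.exp (-R) / 4 * c0 * -(a - a0) = Real.exp (-R) / 4 * c0 * (a0 - a) := by ring
      _ ≤ F a0 - F a := this
      _ ≤ |F a0 - F a| := le_abs_self _

end
end
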